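/- Let n ≥ 1 be an integer and p a prime. Then for all C, D ∈ M_n(𝔽_p): |G_p(C, D)| ≤ p^{(n² + d(C))/2}. -/

import Mathlib

/-- The matrix Gauss sum `G_p(C,D) = ∑_{Z ∈ M_n(𝔽_p)} e^{2πi·tr(CZ² + DZ)/p}`
(set to `0` in the degenerate case `p = 0`). -/
noncomputable def Gauss (n p : ℕ) (C D : Matrix (Fin n) (Fin n) (ZMod p)) : ℂ :=
  if h : p = 0 then 0
  else
    letI : NeZero p := ⟨h⟩
    ∑ Z : Matrix (Fin n) (Fin n) (ZMod p),
      Complex.exp (2 * (Real.pi : ℂ) * Complex.I *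
        (((Matrix.trace (C * Z * Z + D * Z)).val : ℂ) / (p : ℂ)))

/-- `d(C)`: the dimension over `𝔽_p` of `{Z ∈ M_n(𝔽_p) : CZ + ZC = 0}`. -/
noncomputable def dC (n p : ℕ) (C : Matrix (Fin n) (Fin n) (ZMod p)) : ℕ :=
  Module.finrank (ZMod p)
    ↥(LinearMap.ker (LinearMap.mulLeft (ZMod p) C + LinearMap.mulRight (ZMod p) C))

/-- For every prime `p` and `C, D ∈ M_n(𝔽_p)`: `|G_p(C,D)| ≤ p^{(n² + d(C))/2}`. -/
theorem gauss_sum_bound (n p : ℕ) (hn : 1 ≤ n) (hp : p.Prime)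
    (C D : Matrix (Fin n) (Fin n) (ZMod p)) :
    ‖Gauss n p C D‖ ≤ (p : ℝ) ^ (((n ^ 2 + dC n p C : ℕ) : ℝ) / 2) := by
  classical
  haveI : Fact p.Prime := ⟨hp⟩
  haveI : NeZero p := ⟨hp.ne_zero⟩
  have hpC : (p : ℂ) ≠ 0 := Nat.cast_ne_zero.2 hp.ne_zero
  set ζ : ℂ := Complex.exp (2 * Real.pi * Complex.I / p) with hζdef
  have hζp : ζ ^ p = 1 := by
    rw [hζdef, ← Complex.exp_nat_mul, mul_div_cancel₀ _ hpC, Complex.exp_two_pi_mul_I]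
  have hprim : IsPrimitiveRoot ζ p := Complex.isPrimitiveRoot_exp p hp.ne_zero
  set ψ : AddChar (ZMod p) ℂ := AddChar.zmodChar p hζp with hψdef
  have hψ_eq : ∀ x : ZMod p,
      Complex.exp (2 * (Real.pi : ℂ) * Complex.I * ((x.val : ℂ) / (p : ℂ))) = ψ x := by
    intro x
    rw [hψdef, AddChar.zmodChar_apply, hζdef, ← Complex.exp_nat_mul]
    ring_nf
  have hψ1 : ∀ x : ZMod p, ψ x = 1 → x = 0 := by
    intro x hx
    rw [hψdef, AddChar.zmodChar_apply] at hx
    have hd := (IsPrimitiveRoot.pow_eq_one_iff_dvd hprim x.val).1 hx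
    exact (ZMod.val_eq_zero x).1 (Nat.eq_zero_of_dvd_of_lt hd (ZMod.val_lt x))
  have hζabs : ‖ζ‖ = 1 := by
    rw [hζdef, show 2 * (Real.pi:ℂ) * Complex.I / p = ((2 * Real.pi / p : ℝ) : ℂ) * Complex.I
      by push_cast; ring]
    exact Complex.norm_exp_ofReal_mul_I _
  have hψabs : ∀ x : ZMod p, ‖ψ x‖ = 1 := by
    intro x
    rw [hψdef, AddChar.zmodChar_apply, norm_pow, hζabs, one_pow]
  have hψconj : ∀ x : ZMod p, (starRingEnd ℂ) (ψ x) = ψ (-x) := by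
    intro x
    rw [AddChar.map_neg_eq_inv, ← Complex.inv_eq_conj (hψabs x)]
  -- the matrix character sum
  have hmat : ∀ M : Matrix (Fin n) (Fin n) (ZMod p),
      ∑ W : Matrix (Fin n) (Fin n) (ZMod p), ψ ((M * W).trace)
        = if M = 0 then ((p : ℂ) ^ (n ^ 2)) else 0 := by
    intro M
    obtain ⟨f, hf⟩ : ∃ f : Matrix (Fin n) (Fin n) (ZMod p) →+ ZMod p,
        ∀ W, f W = (M * W).trace :=
      ⟨AddMonoidHom.mk' (fun W => (M * W).trace)
        (fun a b => by simp [Matrix.mul_add]), fun W => rfl⟩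
    have : ∀ W, ψ ((M * W).trace) = (ψ.compAddMonoidHom f) W := by
      intro W; rw [AddChar.compAddMonoidHom_apply, hf]
    simp_rw [this]
    rw [AddChar.sum_eq_ite]
    by_cases hM : M = 0
    · have hcard : Fintype.card (Matrix (Fin n) (Fin n) (ZMod p)) = p ^ (n ^ 2) := by
        rw [← Fintype.card_congr (Matrix.of (m := Fin n) (n := Fin n) (α := ZMod p))]
        simp [Fintype.card_fun, ZMod.card, sq, pow_mul]
      rw [if_pos hM, if_pos, hcard]
      · push_cast; ring
      · ext W
        rw [AddChar.compAddMonoidHom_apply, hf, hM, Matrix.zero_mul, Matrix.trace_zero,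
          AddChar.map_zero_eq_one, AddChar.zero_apply]
    · rw [if_neg hM, if_neg]
      intro hzero
      apply hM
      ext i j
      have hij := DFunLike.congr_fun hzero (Matrix.single j i 1)
      rw [AddChar.compAddMonoidHom_apply, hf, AddChar.zero_apply] at hij
      have htr : (M * Matrix.single j i 1).trace = M i j := by
        rw [Matrix.trace, Finset.sum_eq_single i]
        · simp [Matrix.diag]
        · intro k _ hk
          simp [Matrix.diag, Matrix.mul_single_apply_of_ne (hbj := hk)]
        · simp
      rw [htr] at hij
      simpa using hψ1 _ hij
  -- abbreviations
  set t : Matrix (Fin n) (Fin n) (ZMod p) → ZMod p :=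
    fun Z => (C * Z * Z + D * Z).trace with htdef
  set S : ℂ := ∑ Z : Matrix (Fin n) (Fin n) (ZMod p), ψ (t Z) with hSdef
  have hGauss : Gauss n p C D = S := by
    rw [Gauss, dif_neg hp.ne_zero, hSdef]
    exact Finset.sum_congr rfl fun Z _ => hψ_eq _
  -- the key algebraic identity
  have hB : ∀ W Y : Matrix (Fin n) (Fin n) (ZMod p),
      t (W + Y) = t W + ((C * Y * Y + D * Y).trace + ((C * Y + Y * C) * W).trace) := by
    intro W Y
    simp only [htdef, Matrix.mul_add, Matrix.add_mul, Matrix.trace_add]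
    rw [Matrix.trace_mul_cycle C W Y]
    ring
  -- kernel cardinality
  have hker : (Finset.univ.filter
      fun Y : Matrix (Fin n) (Fin n) (ZMod p) => C * Y + Y * C = 0).card
      = p ^ dC n p C := by
    haveI : Fintype ↥(LinearMap.ker
        (LinearMap.mulLeft (ZMod p) C + LinearMap.mulRight (ZMod p) C)) :=
      Fintype.ofFinite _
    have h1 : (Finset.univ.filter
        fun Y : Matrix (Fin n) (Fin n) (ZMod p) => C * Y + Y * C = 0).card
        = Fintype.card ↥(LinearMap.ker
          (LinearMap.mulLeft (ZMod p) C + LinearMap.mulRight (ZMod p) C)) := by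
      rw [← Fintype.card_subtype]
      exact Fintype.card_congr (Equiv.subtypeEquivRight (fun Y => by
        simp [LinearMap.mem_ker, LinearMap.add_apply, LinearMap.mulLeft_apply,
          LinearMap.mulRight_apply]))
    rw [h1, dC, Module.card_eq_pow_finrank (K := ZMod p), ZMod.card]
  -- main estimate on |S|²
  have habs2 : ‖S‖ ^ 2 ≤ (p : ℝ) ^ (n ^ 2 + dC n p C) := by
    have hexp : (starRingEnd ℂ) S * S
        = ∑ Y : Matrix (Fin n) (Fin n) (ZMod p), ψ ((C * Y * Y + D * Y).trace) *
            (if C * Y + Y * C = 0 then ((p : ℂ) ^ (n ^ 2)) else 0) := by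
      have hconjS : (starRingEnd ℂ) S
          = ∑ W : Matrix (Fin n) (Fin n) (ZMod p), ψ (-(t W)) := by
        rw [hSdef, map_sum]
        exact Finset.sum_congr rfl fun W _ => hψconj _
      calc (starRingEnd ℂ) S * S
          = ∑ W : Matrix (Fin n) (Fin n) (ZMod p), ∑ Z : Matrix (Fin n) (Fin n) (ZMod p),
              ψ (-(t W)) * ψ (t Z) := by rw [hconjS, hSdef, Finset.sum_mul_sum]
        _ = ∑ W : Matrix (Fin n) (Fin n) (ZMod p), ∑ Y : Matrix (Fin n) (Fin n) (ZMod p),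
              ψ ((C * Y * Y + D * Y).trace) * ψ (((C * Y + Y * C) * W).trace) := by
            refine Finset.sum_congr rfl fun W _ => ?_
            rw [← Fintype.sum_equiv (Equiv.addLeft W)
              (fun Y => ψ (-(t W)) * ψ (t (W + Y)))
              (fun Z => ψ (-(t W)) * ψ (t Z)) (fun Y => rfl)]
            refine Finset.sum_congr rfl fun Y _ => ?_
            rw [hB W Y, AddChar.map_add_eq_mul, AddChar.map_add_eq_mul, ← mul_assoc,
              ← AddChar.map_add_eq_mul, neg_add_cancel, AddChar.map_zero_eq_one, one_mul]
        _ = ∑ Y : Matrix (Fin n) (Fin n) (ZMod p), ∑ W : Matrix (Fin n) (Fin n) (ZMod p),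
              ψ ((C * Y * Y + D * Y).trace) * ψ (((C * Y + Y * C) * W).trace) :=
            Finset.sum_comm
        _ = ∑ Y : Matrix (Fin n) (Fin n) (ZMod p), ψ ((C * Y * Y + D * Y).trace) *
              (if C * Y + Y * C = 0 then ((p : ℂ) ^ (n ^ 2)) else 0) := by
            refine Finset.sum_congr rfl fun Y _ => ?_
            rw [← Finset.mul_sum, hmat]
    calc ‖S‖ ^ 2 = ‖(starRingEnd ℂ) S * S‖ := by
          rw [norm_mul, Complex.norm_conj, sq]
      _ ≤ ∑ Y : Matrix (Fin n) (Fin n) (ZMod p),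
            ‖ψ ((C * Y * Y + D * Y).trace) *
              (if C * Y + Y * C = 0 then ((p : ℂ) ^ (n ^ 2)) else 0)‖ := by
          rw [hexp]; exact norm_sum_le _ _
      _ = ∑ Y : Matrix (Fin n) (Fin n) (ZMod p),
            (if C * Y + Y * C = 0 then ((p : ℝ) ^ (n ^ 2)) else 0) := by
          refine Finset.sum_congr rfl fun Y _ => ?_
          rw [norm_mul, hψabs, one_mul]
          split_ifs
          · rw [norm_pow, Complex.norm_natCast]
          · exact norm_zero
      _ = (Finset.univ.filter
            fun Y : Matrix (Fin n) (Fin n) (ZMod p) => C * Y + Y * C = 0).card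
            * (p : ℝ) ^ (n ^ 2) := by
          rw [Finset.sum_ite, Finset.sum_const, Finset.sum_const_zero, add_zero,
            nsmul_eq_mul]
      _ = (p : ℝ) ^ (n ^ 2 + dC n p C) := by
          rw [hker, pow_add]
          push_cast
          ring
  -- conclude
  set R : ℝ := (p : ℝ) ^ (((n ^ 2 + dC n p C : ℕ) : ℝ) / 2) with hRdef
  have hppos : (0 : ℝ) ≤ (p : ℝ) := Nat.cast_nonneg p
  have hRpos : 0 ≤ R := Real.rpow_nonneg hppos _
  have hRsq : R ^ 2 = (p : ℝ) ^ (n ^ 2 + dC n p C) := by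
    rw [hRdef, ← Real.rpow_natCast ((p:ℝ) ^ (((n ^ 2 + dC n p C : ℕ) : ℝ) / 2)) 2,
      ← Real.rpow_mul hppos, ← Real.rpow_natCast (p:ℝ) (n ^ 2 + dC n p C)]
    congr 1
    push_cast
    ring
  rw [hGauss]
  have h := Real.sqrt_le_sqrt (habs2.trans_eq hRsq.symm)
  rwa [Real.sqrt_sq (norm_nonneg S), Real.sqrt_sq hRpos] at h
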